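/- Admissible maps of preorders are stable under pullback along identity-on-objects monotone maps: let ≤_{V'}, ≤_V, ≤_T be preorders on a set X with the identity-on-objects map V' → V admissible and ≤_T ⊆ ≤_V. Let ≤_W be the preorder on X defined by x ≤_W y ⟺ (x ≤_{V'} y and x ≤_T y) (the pullback V' ×_V T). Then the identity-on-objects map W → T is admissible. -/

import Mathlib

section Defs

variable {α β : Type*}

/-- `f` is monotone from the relation `r` to the relation `s`. -/
def Mono (r : α → α → Prop) (s : β → β → Prop) (f : α → β) : Prop :=
  ∀ a b, r a b → s (f a) (f b)

/-- A monotone map `f` is convex if whenever `f x ≤ w ≤ f y` there is a unique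
`p` with `x ≤ p ≤ y` and `f p = w`. -/
def ConvexMap (r : α → α → Prop) (s : β → β → Prop) (f : α → β) : Prop :=
  Mono r s f ∧ ∀ x y w, s (f x) w → s w (f y) → ∃! p, r x p ∧ r p y ∧ f p = w

/-- A subset `S` is connected (w.r.t. the order relation `r`) if any two of its
elements are joined by a finite zigzag of comparable pairs lying in `S`. -/
def ConnectedIn (r : α → α → Prop) (S : Set α) : Prop :=
  ∀ x ∈ S, ∀ y ∈ S,
    Relation.ReflTransGen (fun a b => a ∈ S ∧ b ∈ S ∧ (r a b ∨ r b a)) x y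

/-- A subset `S` is order-convex w.r.t. `r`. -/
def OrdConvexIn (r : α → α → Prop) (S : Set α) : Prop :=
  ∀ x ∈ S, ∀ y ∈ S, ∀ z, r x z → r z y → z ∈ S

/-- The strict relation associated to `r`. -/
def LtRel (r : α → α → Prop) (a b : α) : Prop := r a b ∧ ¬ r b a

/-- `b` covers `a` w.r.t. `r`. -/
def CovRel (r : α → α → Prop) (a b : α) : Prop :=
  LtRel r a b ∧ ∀ c, ¬ (LtRel r a c ∧ LtRel r c b)

/-- A contraction: a monotone surjection with connected convex fibres that lifts covers. -/
def IsContraction (r : α → α → Prop) (s : β → β → Prop) (f : α → β) : Prop :=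
  Mono r s f ∧ Function.Surjective f ∧
  (∀ q, ConnectedIn r (f ⁻¹' {q}) ∧ OrdConvexIn r (f ⁻¹' {q})) ∧
  ∀ q q', CovRel s q q' → ∃ p p', CovRel r p p' ∧ f p = q ∧ f p' = q'

/-- A collapse map: a monotone surjection which partially reflects the strict order. -/
def IsCollapse (r : α → α → Prop) (s : β → β → Prop) (f : α → β) : Prop :=
  Mono r s f ∧ Function.Surjective f ∧ ∀ x y, LtRel s (f x) (f y) → LtRel r x y

/-- `r` is a partial order relation. -/
def IsPartialOrderRel (r : α → α → Prop) : Prop :=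
  (∀ a, r a a) ∧ (∀ a b c, r a b → r b c → r a c) ∧ (∀ a b, r a b → r b a → a = b)

/-- `r` is a preorder relation. -/
def IsPreorderRel (r : α → α → Prop) : Prop :=
  (∀ a, r a a) ∧ ∀ a b c, r a b → r b c → r a c

/-- The symmetrization `x ∼ y` of a preorder relation. -/
def Sim (r : α → α → Prop) (x y : α) : Prop := r x y ∧ r y x

/-- The quotient preorder `T/T'`: the transitive closure of
`x R y ⟺ (x ≤_T y or y ≤_{T'} x)`. -/
def QuotRel (r r' : α → α → Prop) : α → α → Prop :=
  Relation.TransGen (fun x y => r x y ∨ r' y x)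

/-- The identity-on-objects monotone map of preorders `T' → T` is admissible. -/
def Admissible (r' r : α → α → Prop) : Prop :=
  (∀ x y, r' x y → r x y) ∧
  (∀ Y : Set α, ConnectedIn r' Y → ∀ x ∈ Y, ∀ y ∈ Y, (r x y ↔ r' x y)) ∧
  (∀ x y, Sim (QuotRel r r') x y ↔ Sim (QuotRel r' r') x y)

/-- The identity-on-objects monotone map of preorders `T → V` is a contraction of preorders. -/
def PreContraction (r v : α → α → Prop) : Prop :=
  (∀ x y, r x y → v x y) ∧
  (∀ x, ConnectedIn r {y | Sim v x y}) ∧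
  ∀ a a', CovRel v a a' → ∃ t t', CovRel r t t' ∧ t = a ∧ t' = a'

/-- The setoid on `α` whose relation is the symmetrization of the preorder relation `r`. -/
def simSetoid (r : α → α → Prop) (h : IsPreorderRel r) : Setoid α where
  r := Sim r
  iseqv := ⟨fun x => ⟨h.1 x, h.1 x⟩, fun hxy => ⟨hxy.2, hxy.1⟩,
    fun h1 h2 => ⟨h.2 _ _ _ h1.1 h2.1, h.2 _ _ _ h2.2 h1.2⟩⟩

/-- The partial order relation on the posetification (antisymmetrization) of a preorder. -/
def posetLe (r : α → α → Prop) (h : IsPreorderRel r) :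
    Quotient (simSetoid r h) → Quotient (simSetoid r h) → Prop :=
  Quotient.lift₂ r (fun _ _ _ _ hx hy => propext
    ⟨fun hr => h.2 _ _ _ (h.2 _ _ _ hx.2 hr) hy.1,
     fun hr => h.2 _ _ _ (h.2 _ _ _ hx.1 hr) hy.2⟩)

/-- A tree: a poset with a greatest element in which every interval is linearly ordered. -/
def IsTreeRel (r : α → α → Prop) : Prop :=
  (∃ t, ∀ p, r p t) ∧
  ∀ p p' z w, r p z → r z p' → r p w → r w p' → (r z w ∨ r w z)

/-- The connected component of `p` w.r.t. the order relation `r`. -/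
def component (r : α → α → Prop) (p : α) : Set α :=
  {q | Relation.ReflTransGen (fun a b => r a b ∨ r b a) p q}

/-- A forest: a poset each of whose connected components is a tree. -/
def IsForestRel (r : α → α → Prop) : Prop :=
  ∀ p, IsTreeRel (fun a b : component r p => r a.1 b.1)

end Defs

/-- admissible maps of preorders are stable under pullback along
identity-on-objects monotone maps. -/
theorem admissible_stable_under_pullback {X : Type*} (rV' rV rT : X → X → Prop)
    (hV' : IsPreorderRel rV') (hV : IsPreorderRel rV) (hT : IsPreorderRel rT)
    (hadm : Admissible rV' rV)
    (hsub : ∀ x y, rT x y → rV x y) :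
    Admissible (fun x y => rV' x y ∧ rT x y) rT := by
  obtain ⟨hV'V, hconnV, hsimV⟩ := hadm
  -- zigzag relation for rV'
  set zig : X → X → Prop := fun a b => rV' a b ∨ rV' b a with hzig
  -- components of zig are connected in rV'
  have hYconn : ∀ x : X, ConnectedIn rV' {z | Relation.ReflTransGen zig x z} := by
    intro x
    set Y : Set X := {z | Relation.ReflTransGen zig x z} with hY
    have hann : ∀ z ∈ Y,
        Relation.ReflTransGen (fun a b => a ∈ Y ∧ b ∈ Y ∧ (rV' a b ∨ rV' b a)) x z := by
      intro z hz
      induction hz with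
      | refl => exact Relation.ReflTransGen.refl
      | tail hxb hbc ih =>
        exact Relation.ReflTransGen.tail ih ⟨hxb, Relation.ReflTransGen.tail hxb hbc, hbc⟩
    have hsymm : Symmetric (fun a b => a ∈ Y ∧ b ∈ Y ∧ (rV' a b ∨ rV' b a)) := by
      rintro a b ⟨ha, hb, h⟩; exact ⟨hb, ha, h.symm⟩
    intro p hp q hq
    exact Relation.ReflTransGen.trans
      ((@Relation.ReflTransGen.stdSymm _ _ ⟨fun a b h => hsymm h⟩).symm _ _ (hann p hp)) (hann q hq)
  refine ⟨fun x y h => h.2, ?_, ?_⟩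
  · -- condition (2)
    intro Y hconn x hx y hy
    have hconn' : ConnectedIn rV' Y := by
      intro a ha b hb
      refine Relation.ReflTransGen.mono ?_ _ _ (hconn a ha b hb)
      rintro u v ⟨hu, hv, h | h⟩
      · exact ⟨hu, hv, Or.inl h.1⟩
      · exact ⟨hu, hv, Or.inr h.1⟩
    constructor
    · intro hT'
      refine ⟨?_, hT'⟩
      exact (hconnV Y hconn' x hx y hy).1 (hsub _ _ hT')
    · exact fun h => h.2
  · -- condition (3)
    intro x y
    constructor
    · rintro ⟨hxy, hyx⟩
      -- work in the component of x
      set Y : Set X := {z | Relation.ReflTransGen zig x z} with hY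
      have hYc := hYconn x
      -- QuotRel rT W implies QuotRel rV rV'
      have h1 : ∀ a b, QuotRel rT (fun x y => rV' x y ∧ rT x y) a b → QuotRel rV rV' a b := by
        intro a b h
        refine Relation.TransGen.mono ?_ _ _ h
        rintro u v (h | h)
        · exact Or.inl (hsub _ _ h)
        · exact Or.inr h.1
      -- membership in Y of intermediate points
      have hmem : ∀ z, QuotRel rT (fun x y => rV' x y ∧ rT x y) x z →
          QuotRel rT (fun x y => rV' x y ∧ rT x y) z y → z ∈ Y := by
        intro z hxz hzy
        have hzx : QuotRel rT (fun x y => rV' x y ∧ rT x y) z x :=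
          Relation.TransGen.trans hzy hyx
        have hs : Sim (QuotRel rV rV') x z := ⟨h1 _ _ hxz, h1 _ _ hzx⟩
        have hs' : Sim (QuotRel rV' rV') x z := (hsimV x z).1 hs
        have : Relation.TransGen zig x z := by
          refine Relation.TransGen.mono ?_ _ _ hs'.1
          exact fun u v h => h
        exact this.to_reflTransGen
      -- steps inside Y can be improved
      have hstep : ∀ a b, a ∈ Y → b ∈ Y →
          (rT a b ∨ (rV' b a ∧ rT b a)) →
          ((rV' a b ∧ rT a b) ∨ (rV' b a ∧ rT b a)) := by
        intro a b ha hb h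
        rcases h with h | h
        · exact Or.inl ⟨(hconnV Y hYc a ha b hb).1 (hsub _ _ h), h⟩
        · exact Or.inr h
      have hmain : ∀ a b, Relation.TransGen
            (fun u v => rT u v ∨ (rV' v u ∧ rT v u)) a b →
          QuotRel rT (fun x y => rV' x y ∧ rT x y) b y →
          QuotRel rT (fun x y => rV' x y ∧ rT x y) x a →
          Relation.TransGen
            (fun u v => (rV' u v ∧ rT u v) ∨ (rV' v u ∧ rT v u)) a b := by
        intro a b h hby
        induction h using Relation.TransGen.head_induction_on with
        | single h =>
          rename_i a'
          intro hxa
          have hay : QuotRel rT (fun x y => rV' x y ∧ rT x y) a' y :=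
            Relation.TransGen.trans (Relation.TransGen.single h) hby
          have hxb : QuotRel rT (fun x y => rV' x y ∧ rT x y) x b :=
            Relation.TransGen.trans hxa (Relation.TransGen.single h)
          exact Relation.TransGen.single
            (hstep _ _ (hmem _ hxa hay) (hmem _ hxb hby) h)
        | head h' h ih =>
          rename_i a' c
          intro hxa
          have hxc : QuotRel rT (fun x y => rV' x y ∧ rT x y) x c :=
            Relation.TransGen.trans hxa (Relation.TransGen.single h')
          have hay : QuotRel rT (fun x y => rV' x y ∧ rT x y) a' y :=
            Relation.TransGen.trans (Relation.TransGen.head h' h) hby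
          have hcy : QuotRel rT (fun x y => rV' x y ∧ rT x y) c y :=
            Relation.TransGen.trans h hby
          exact Relation.TransGen.head
            (hstep _ _ (hmem _ hxa hay) (hmem _ hxc hcy) h') (ih hxc)
      have hxx : QuotRel rT (fun x y => rV' x y ∧ rT x y) x x :=
        Relation.TransGen.trans hxy hyx
      have hyy : QuotRel rT (fun x y => rV' x y ∧ rT x y) y y :=
        Relation.TransGen.trans hyx hxy
      exact ⟨hmain x y hxy hyy hxx, hmain y x hyx hxy hxy⟩
    · rintro ⟨hxy, hyx⟩
      have mono : ∀ a b, QuotRel (fun x y => rV' x y ∧ rT x y) (fun x y => rV' x y ∧ rT x y) a b →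
          QuotRel rT (fun x y => rV' x y ∧ rT x y) a b := by
        intro a b h
        refine Relation.TransGen.mono ?_ _ _ h
        rintro u v (h | h)
        · exact Or.inl h.2
        · exact Or.inr h
      exact ⟨mono _ _ hxy, mono _ _ hyx⟩
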